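/- arXiv:1503.05208 — 7 statements merged into one kernel-verified Lean document; each statement's English description precedes it below -/
import Mathlib

section
/- Let A, B, C be positive real numbers, and define v₁ = (A − B)/(A + B), v₂ = (B − C)/(B + C), v₃ = (A − C)/(A + C). Then v₃ = (v₁ + v₂)/(1 + v₁v₂). -/
theorem spectroscopic_velocity_addition
    (A B C : ℝ) (hA : 0 < A) (hB : 0 < B) (hC : 0 < C)
    (v₁ v₂ v₃ : ℝ)
    (hv₁ : v₁ = (A - B) / (A + B))
    (hv₂ : v₂ = (B - C) / (B + C))
    (hv₃ : v₃ = (A - C) / (A + C)) :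
    v₃ = (v₁ + v₂) / (1 + v₁ * v₂) := by
  subst hv₁ hv₂ hv₃
  have hAB : A + B ≠ 0 := by positivity
  have hBC : B + C ≠ 0 := by positivity
  have hAC : A + C ≠ 0 := by positivity
  have hden : 1 + (A - B) / (A + B) * ((B - C) / (B + C)) ≠ 0 := by
    rw [div_mul_div_comm]
    have : (1 : ℝ) + (A - B) * (B - C) / ((A + B) * (B + C))
        = (2 * B * (A + C)) / ((A + B) * (B + C)) := by
      field_simp; ring
    rw [this]
    positivity
  rw [div_eq_div_iff hAC hden]
  field_simp
  ring
end

section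
/- Let A, B, C be positive real numbers, and define v₁ = −(B − A)/(A + B), v₂ = (B − C)/(B + C), v₃ = (A − C)/(A + C). Then v₃ = (v₁ + v₂)/(1 + v₁v₂). -/
theorem spectroscopic_velocity_addition_negative_chi
    (A B C : ℝ) (hA : 0 < A) (hB : 0 < B) (hC : 0 < C)
    (v₁ v₂ v₃ : ℝ)
    (hv₁ : v₁ = -((B - A) / (A + B)))
    (hv₂ : v₂ = (B - C) / (B + C))
    (hv₃ : v₃ = (A - C) / (A + C)) :
    v₃ = (v₁ + v₂) / (1 + v₁ * v₂) := by
  have hAB : A + B ≠ 0 := by positivity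
  have hBC : B + C ≠ 0 := by positivity
  have hAC : A + C ≠ 0 := by positivity
  have hden : 1 + v₁ * v₂ ≠ 0 := by
    rw [hv₁, hv₂]
    have : 1 + -((B - A) / (A + B)) * ((B - C) / (B + C)) =
        (2 * (A * B + B * C)) / ((A + B) * (B + C)) := by
      field_simp; ring
    rw [this]
    positivity
  rw [hv₃, eq_div_iff hden, hv₁, hv₂]
  field_simp
  ring
end

section
/- Let g₁, g₂, g₃ be real numbers, and let v₁, v₂, v₃ be real numbers with |v₁| < 1, |v₂| < 1, |v₃| < 1 satisfying v₃ = (v₁ + v₂)/(1 + v₁v₂). Define w₁ = −(1/2)·(g₁ + (1 − v₁)/(1 + v₁)), w₂ = −(1/2)·(g₂ + (1 − v₂)/(1 + v₂)), and w₃ = −(1/2)·(g₃ + (1 − v₃)/(1 + v₃)). Then −(2w₃ + g₃) = (2w₁ + g₁)·(2w₂ + g₂). -/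
theorem astrometric_velocity_addition
    (g₁ g₂ g₃ : ℝ) (v₁ v₂ v₃ : ℝ)
    (h₁ : |v₁| < 1) (h₂ : |v₂| < 1) (h₃ : |v₃| < 1)
    (hadd : v₃ = (v₁ + v₂) / (1 + v₁ * v₂))
    (w₁ w₂ w₃ : ℝ)
    (hw₁ : w₁ = -(1 / 2) * (g₁ + (1 - v₁) / (1 + v₁)))
    (hw₂ : w₂ = -(1 / 2) * (g₂ + (1 - v₂) / (1 + v₂)))
    (hw₃ : w₃ = -(1 / 2) * (g₃ + (1 - v₃) / (1 + v₃))) :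
    -(2 * w₃ + g₃) = (2 * w₁ + g₁) * (2 * w₂ + g₂) := by
  obtain ⟨a₁, b₁⟩ := abs_lt.mp h₁
  obtain ⟨a₂, b₂⟩ := abs_lt.mp h₂
  have hv₁ : (1 : ℝ) + v₁ ≠ 0 := by linarith
  have hv₂ : (1 : ℝ) + v₂ ≠ 0 := by linarith
  have hv₁₂ : (1 : ℝ) + v₁ * v₂ ≠ 0 := by nlinarith
  have hv₃ : (1 : ℝ) + v₃ ≠ 0 := by cases abs_lt.mp h₃; linarith
  have hp : (1 : ℝ) + v₁ + v₁ * v₂ + v₂ ≠ 0 := by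
    intro h; apply mul_ne_zero hv₁ hv₂; nlinarith
  subst hw₁ hw₂ hw₃ hadd
  field_simp [hp]
  have hu : (1 + v₁ + v₁ * v₂ + v₂) * (1 + v₁ + v₁ * v₂ + v₂)⁻¹ = 1 := mul_inv_cancel₀ hp
  linear_combination (1 * (1 - v₁) * (1 - v₂)) * hu
end

section
/- Let v₁, v₂ be real numbers with |v₁| < 1 and |v₂| < 1, let v₃ = (v₁ + v₂)/(1 + v₁v₂), and define w₁ = v₁/(1 + v₁), w₂ = v₂/(1 + v₂), w₃ = v₃/(1 + v₃). Then w₃ = w₁ + w₂ − 2·w₁·w₂. -/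
theorem milne_astrometric_velocity_addition
    (v₁ v₂ : ℝ) (h₁ : |v₁| < 1) (h₂ : |v₂| < 1)
    (v₃ : ℝ) (hv₃ : v₃ = (v₁ + v₂) / (1 + v₁ * v₂))
    (w₁ w₂ w₃ : ℝ)
    (hw₁ : w₁ = v₁ / (1 + v₁)) (hw₂ : w₂ = v₂ / (1 + v₂))
    (hw₃ : w₃ = v₃ / (1 + v₃)) :
    w₃ = w₁ + w₂ - 2 * w₁ * w₂ := by
  have ha₁ : -1 < v₁ := (abs_lt.mp h₁).1
  have hb₁ : v₁ < 1 := (abs_lt.mp h₁).2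
  have ha₂ : -1 < v₂ := (abs_lt.mp h₂).1
  have hb₂ : v₂ < 1 := (abs_lt.mp h₂).2
  have hp₁ : (0:ℝ) < 1 + v₁ := by linarith
  have hp₂ : (0:ℝ) < 1 + v₂ := by linarith
  have hp₃ : (0:ℝ) < 1 + v₁ * v₂ := by nlinarith
  have hp₄ : (0:ℝ) < 1 + v₃ := by
    rw [hv₃]
    have : 1 + (v₁ + v₂) / (1 + v₁ * v₂) = (1 + v₁) * (1 + v₂) / (1 + v₁ * v₂) := by
      field_simp; ring
    rw [this]
    positivity
  have hq : (1:ℝ) + v₁ * v₂ ≠ 0 := ne_of_gt hp₃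
  have key : w₃ = (v₁ + v₂) / ((1 + v₁) * (1 + v₂)) := by
    rw [hw₃, hv₃]
    have h2 : 1 + (v₁ + v₂) / (1 + v₁ * v₂) = (1 + v₁) * (1 + v₂) / (1 + v₁ * v₂) := by
      field_simp; ring
    rw [h2, div_div_div_comm, div_self hq, div_one]
  rw [key, hw₁, hw₂]
  field_simp
  ring
end

section
/- Let τ₀ > 0 and let χ₁, χ₂ be real numbers. Define v₁ = χ₁/(3·τ₀^(2/3)) and assume |v₁| < 1. Let τ₁ = (1 − v₁²)^(3/2)·τ₀, and define v₂ = (χ₂ − χ₁)/(3·τ₁^(2/3)) and v₃ = χ₂/(3·τ₀^(2/3)). Then v₃ = v₁ + (1 − v₁²)·v₂. -/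
theorem power_third_kinematic_addition
    (τ₀ : ℝ) (hτ₀ : 0 < τ₀) (χ₁ χ₂ : ℝ)
    (v₁ : ℝ) (hv₁ : v₁ = χ₁ / (3 * τ₀ ^ ((2 : ℝ) / 3)))
    (h₁ : |v₁| < 1)
    (τ₁ : ℝ) (hτ₁ : τ₁ = (1 - v₁ ^ 2) ^ ((3 : ℝ) / 2) * τ₀)
    (v₂ v₃ : ℝ)
    (hv₂ : v₂ = (χ₂ - χ₁) / (3 * τ₁ ^ ((2 : ℝ) / 3)))
    (hv₃ : v₃ = χ₂ / (3 * τ₀ ^ ((2 : ℝ) / 3))) :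
    v₃ = v₁ + (1 - v₁ ^ 2) * v₂ := by
  have hB : 0 < 1 - v₁ ^ 2 := by
    have := abs_lt.mp h₁
    nlinarith [this.1, this.2]
  have hA : 0 < τ₀ ^ ((2 : ℝ) / 3) := Real.rpow_pos_of_pos hτ₀ _
  have hτ1 : τ₁ ^ ((2 : ℝ) / 3) = (1 - v₁ ^ 2) * τ₀ ^ ((2 : ℝ) / 3) := by
    rw [hτ₁, Real.mul_rpow (Real.rpow_nonneg hB.le _) hτ₀.le,
        ← Real.rpow_mul hB.le]
    norm_num
  have hχ₁ : χ₁ = v₁ * (3 * τ₀ ^ ((2 : ℝ) / 3)) := by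
    rw [hv₁]; field_simp
  rw [hv₂, hτ1, hv₃, hχ₁]
  field_simp
  ring
end

section
/- For every real number v, let w = v·(1 + v²) and let C = ((−27w + √(27·(4 + 27w²)))/2)^(1/3) (the real cube root). Then C > 0 and v = 1/C − C/3. -/
theorem fermi_inverse_power_third (v : ℝ)
    (w : ℝ) (hw : w = v * (1 + v ^ 2))
    (C : ℝ)
    (hC : C = ((-27 * w + Real.sqrt (27 * (4 + 27 * w ^ 2))) / 2) ^ ((1 : ℝ) / 3)) :
    0 < C ∧ v = 1 / C - C / 3 := by
  set s := Real.sqrt (9 * v ^ 2 + 12) with hs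
  have hsnn : (0:ℝ) ≤ 9 * v ^ 2 + 12 := by positivity
  have hs2 : s ^ 2 = 9 * v ^ 2 + 12 := Real.sq_sqrt hsnn
  obtain ⟨c, hc⟩ : ∃ c : ℝ, c = (-3 * v + s) / 2 := ⟨_, rfl⟩
  have hcpos : 0 < c := by
    have h1 : 3 * v < s := by
      nlinarith [Real.sqrt_nonneg (9 * v ^ 2 + 12), hs2]
    rw [hc]; linarith
  -- the square root simplifies
  have hsqrt : Real.sqrt (27 * (4 + 27 * w ^ 2)) = 3 * (3 * v ^ 2 + 1) * s := by
    rw [show 27 * (4 + 27 * w ^ 2) = (3 * (3 * v ^ 2 + 1)) ^ 2 * (9 * v ^ 2 + 12) by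
      rw [hw]; ring]
    rw [Real.sqrt_mul (by positivity), Real.sqrt_sq (by positivity)]
  have hA : (-27 * w + Real.sqrt (27 * (4 + 27 * w ^ 2))) / 2 = c ^ 3 := by
    rw [hsqrt, hw, hc]
    linear_combination ((9 * v - s) / 8) * hs2
  have hCc : C = c := by
    rw [hC, hA, ← Real.rpow_natCast c 3, ← Real.rpow_mul hcpos.le]
    norm_num
  refine ⟨hCc ▸ hcpos, ?_⟩
  have hquad : c ^ 2 + 3 * v * c - 3 = 0 := by
    rw [hc]; linear_combination hs2 / 4
  rw [hCc]
  field_simp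
  linear_combination hquad
end

section
/- Define C : ℝ → ℝ by C(w) = ((−27w + √(27·(4 + 27w²)))/2)^(1/3) (real cube root) and V : ℝ → ℝ by V(w) = 1/C(w) − C(w)/3. Let v₁, v₂ be real numbers and set w₁ = v₁·(1 + v₁²), w₂ = v₂·(1 + v₂²), v₃ = v₁ + (1 − v₁²)·v₂, and w₃ = v₃·(1 + v₃²). Then w₃ = (V(w₁) + (1 − V(w₁)²)·V(w₂)) · (1 + (V(w₁) + (1 − V(w₁)²)·V(w₂))²). -/
noncomputable def cubeC (w : ℝ) : ℝ :=
  ((-27 * w + Real.sqrt (27 * (4 + 27 * w ^ 2))) / 2) ^ ((1 : ℝ) / 3)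

noncomputable def hubbleOfFermi (w : ℝ) : ℝ :=
  1 / cubeC w - cubeC w / 3

lemma hubbleOfFermi_inv (v : ℝ) : hubbleOfFermi (v * (1 + v ^ 2)) = v := by
  set s : ℝ := Real.sqrt (9 * v ^ 2 + 12) with hsdef
  have hs : s ^ 2 = 9 * v ^ 2 + 12 := Real.sq_sqrt (by positivity)
  have hsnn : 0 ≤ s := Real.sqrt_nonneg _
  set c : ℝ := (-3 * v + s) / 2 with hcdef
  have hcpos : 0 < c := by
    rw [hcdef]; nlinarith [hs, hsnn, sq_nonneg (s - 3 * v), sq_nonneg (s + 3 * v)]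
  have hsqrt : Real.sqrt (27 * (4 + 27 * (v * (1 + v ^ 2)) ^ 2)) = 3 * (3 * v ^ 2 + 1) * s := by
    have h27 : 27 * (4 + 27 * (v * (1 + v ^ 2)) ^ 2) = (3 * (3 * v ^ 2 + 1) * s) ^ 2 := by
      linear_combination (-(9 * (3 * v ^ 2 + 1) ^ 2)) * hs
    rw [h27, Real.sqrt_sq (by positivity)]
  have harg : (-27 * (v * (1 + v ^ 2)) + 3 * (3 * v ^ 2 + 1) * s) / 2 = c ^ 3 := by
    rw [hcdef]; linear_combination ((9 * v - s) / 8) * hs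
  have hC : cubeC (v * (1 + v ^ 2)) = c := by
    unfold cubeC
    rw [hsqrt, harg, ← Real.rpow_natCast c 3, ← Real.rpow_mul hcpos.le]
    norm_num
  have hc2 : c ^ 2 + 3 * v * c = 3 := by
    rw [hcdef]; linear_combination (1 / 4) * hs
  unfold hubbleOfFermi
  rw [hC]
  field_simp
  linear_combination hc2 - (1 / 2) * hs

theorem fermi_velocity_addition_power_third
    (v₁ v₂ : ℝ) (w₁ w₂ v₃ w₃ : ℝ)
    (hw₁ : w₁ = v₁ * (1 + v₁ ^ 2))
    (hw₂ : w₂ = v₂ * (1 + v₂ ^ 2))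
    (hv₃ : v₃ = v₁ + (1 - v₁ ^ 2) * v₂)
    (hw₃ : w₃ = v₃ * (1 + v₃ ^ 2)) :
    w₃ = (hubbleOfFermi w₁ + (1 - (hubbleOfFermi w₁) ^ 2) * hubbleOfFermi w₂) *
      (1 + (hubbleOfFermi w₁ + (1 - (hubbleOfFermi w₁) ^ 2) * hubbleOfFermi w₂) ^ 2) := by
  subst hw₁ hw₂ hv₃ hw₃
  rw [hubbleOfFermi_inv, hubbleOfFermi_inv]
end
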